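/- Interval regularity lemma for functions: Let 0 < ε ≤ 1 and let m be a positive integer. Set q = ⌈16·ε^{-3}⌉. For every measurable function f : [0,1]² → [0,1] there exists an integer i with 0 ≤ i < ⌈4·ε^{-5}⌉ such that, with k = m·q^i, the partition of [0,1] into the k equal-length intervals [0,1/k), [1/k,2/k), …, [(k−1)/k, 1] is interval ε-regular for f. In particular, there is some integer k with m ≤ k ≤ m·⌈16·ε^{-3}⌉^{⌈4·ε^{-5}⌉} for which the partition of [0,1] into k equal-length intervals is interval ε-regular for f. -/

import Mathlib

open Finset MeasureTheory

/-- Normalized integral density `d_f(A,B) = (∫_{A×B} f) / (λ(A) λ(B))`. -/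
noncomputable def dBox (f : ℝ × ℝ → ℝ) (A B : Set ℝ) : ℝ :=
  (∫ p in A ×ˢ B, f p) / ((volume A).toReal * (volume B).toReal)

/-- The pair of intervals `(I,J)` is interval `ε`-regular for `f`: for all subintervals
`A ⊆ I`, `B ⊆ J` with `λ(A) ≥ ε λ(I)` and `λ(B) ≥ ε λ(J)`,
`|d_f(A,B) - d_f(I,J)| ≤ ε`. -/
def IntervalRegularPair (f : ℝ × ℝ → ℝ) (ε : ℝ) (I J : Set ℝ) : Prop :=
  ∀ A B : Set ℝ, A ⊆ I → B ⊆ J → A.OrdConnected → B.OrdConnected →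
    ε * (volume I).toReal ≤ (volume A).toReal →
    ε * (volume J).toReal ≤ (volume B).toReal →
    |dBox f A B - dBox f I J| ≤ ε

/-- The `i`-th part of the partition of `[0,1]` into `k` equal-length intervals
`[0,1/k), [1/k,2/k), …, [(k-1)/k, 1]`. -/
noncomputable def eqInterval (k : ℕ) (i : Fin k) : Set ℝ :=
  if (i : ℕ) = k - 1 then Set.Icc (((i : ℕ) : ℝ) / k) 1
  else Set.Ico (((i : ℕ) : ℝ) / k) ((((i : ℕ) : ℝ) + 1) / k)

set_option maxHeartbeats 2000000


noncomputable def cell (n s : ℕ) : Set ℝ := Set.Ico ((s : ℝ) / n) (((s : ℝ) + 1) / n)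

lemma cell_measurable (n s : ℕ) : MeasurableSet (cell n s) := measurableSet_Ico

lemma cell_ordConnected (n s : ℕ) : (cell n s).OrdConnected := Set.ordConnected_Ico

lemma volume_cell (n s : ℕ) (hn : 0 < n) : volume (cell n s) = ENNReal.ofReal (1 / n) := by
  have hn' : (0:ℝ) < n := by exact_mod_cast hn
  rw [cell, Real.volume_Ico]
  congr 1
  field_simp
  ring

lemma volume_cell_toReal (n s : ℕ) (hn : 0 < n) : (volume (cell n s)).toReal = 1 / n := by
  rw [volume_cell n s hn, ENNReal.toReal_ofReal (by positivity)]

lemma cell_disjoint (n : ℕ) {s t : ℕ} (hst : s ≠ t) : Disjoint (cell n s) (cell n t) := by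
  rcases Nat.eq_zero_or_pos n with rfl | hn
  · simp [cell, Set.Ico_self, Nat.cast_zero]
  have hn' : (0:ℝ) < n := by exact_mod_cast hn
  rw [cell, cell, Set.Ico_disjoint_Ico]
  rcases lt_or_gt_of_ne hst with h | h
  · have : (s:ℝ) + 1 ≤ t := by exact_mod_cast h
    calc min (((s:ℝ)+1)/n) (((t:ℝ)+1)/n) ≤ ((s:ℝ)+1)/n := min_le_left _ _
      _ ≤ (t:ℝ)/n := by gcongr
      _ ≤ max ((s:ℝ)/n) ((t:ℝ)/n) := le_max_right _ _
  · have : (t:ℝ) + 1 ≤ s := by exact_mod_cast h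
    calc min (((s:ℝ)+1)/n) (((t:ℝ)+1)/n) ≤ ((t:ℝ)+1)/n := min_le_right _ _
      _ ≤ (s:ℝ)/n := by gcongr
      _ ≤ max ((s:ℝ)/n) ((t:ℝ)/n) := le_max_left _ _

lemma cell_subset_cell {k q i a : ℕ} (hk : 0 < k) (hq : 0 < q) (ha : a < q) :
    cell (k * q) (i * q + a) ⊆ cell k i := by
  have hk' : (0:ℝ) < k := by exact_mod_cast hk
  have hq' : (0:ℝ) < q := by exact_mod_cast hq
  have hkq : (0:ℝ) < (k:ℝ) * q := by positivity
  apply Set.Ico_subset_Ico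
  · rw [div_le_div_iff₀ hk' (by push_cast; linarith)]
    push_cast
    nlinarith [Nat.cast_nonneg (α := ℝ) a]
  · rw [div_le_div_iff₀ (by push_cast; linarith) hk']
    have ha' : (a:ℝ) + 1 ≤ q := by exact_mod_cast ha
    push_cast
    nlinarith

lemma Ico_biUnion (c h : ℝ) (hh : 0 ≤ h) (q : ℕ) :
    Set.Ico c (c + q * h) = ⋃ a ∈ Finset.range q, Set.Ico (c + a * h) (c + (a + 1) * h) := by
  induction q with
  | zero => simp
  | succ q ih =>
    rw [Finset.range_add_one]
    rw [Finset.set_biUnion_insert]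
    rw [← ih]
    rw [Set.union_comm, Set.Ico_union_Ico_eq_Ico]
    · push_cast; ring_nf
    · nlinarith [Nat.cast_nonneg (α := ℝ) q]
    · push_cast; nlinarith [Nat.cast_nonneg (α := ℝ) q]

lemma cell_eq_biUnion {k q : ℕ} (hk : 0 < k) (hq : 0 < q) (i : ℕ) :
    cell k i = ⋃ a ∈ Finset.range q, cell (k * q) (i * q + a) := by
  have hk' : (0:ℝ) < k := by exact_mod_cast hk
  have hq' : (0:ℝ) < q := by exact_mod_cast hq
  have hkne : (k:ℝ) ≠ 0 := ne_of_gt hk'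
  have hqne : (q:ℝ) ≠ 0 := ne_of_gt hq'
  have h1 : cell k i = Set.Ico ((i:ℝ)/k) ((i:ℝ)/k + q * (1 / (k*q))) := by
    rw [cell, show (q:ℝ) * (1/((k:ℝ)*q)) = 1/k from by rw [one_div, mul_inv, ← mul_assoc, mul_comm (q:ℝ), mul_assoc, mul_inv_cancel₀ hqne, mul_one, one_div], ← add_div]
  rw [h1, Ico_biUnion _ _ (by positivity)]
  apply Set.iUnion_congr; intro a
  apply Set.iUnion_congr; intro _
  rw [cell]
  have e1 : (i:ℝ)/k + (a:ℝ) * (1/((k:ℝ)*q)) = ((i*q+a : ℕ):ℝ)/((k*q : ℕ):ℝ) := by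
    push_cast; field_simp
  have e2 : (i:ℝ)/k + ((a:ℝ)+1) * (1/((k:ℝ)*q)) = (((i*q+a : ℕ):ℝ)+1)/((k*q : ℕ):ℝ) := by
    push_cast; field_simp; ring
  rw [e1, e2]

section IntBasics
variable {f : ℝ × ℝ → ℝ} (hmeas : Measurable f) (hf : ∀ p, f p ∈ Set.Icc (0:ℝ) 1)
variable {A B A' B' : Set ℝ}

lemma volume_prod_set (A B : Set ℝ) : volume (A ×ˢ B) = volume A * volume B := by
  rw [Measure.volume_eq_prod, Measure.prod_prod]

include hmeas hf in
lemma integrableOn_prod (hAf : volume A ≠ ⊤) (hBf : volume B ≠ ⊤) :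
    IntegrableOn f (A ×ˢ B) volume := by
  apply Measure.integrableOn_of_bounded (M := 1)
  · rw [volume_prod_set]
    exact ENNReal.mul_ne_top hAf hBf
  · exact hmeas.aestronglyMeasurable
  · filter_upwards with p
    rw [Real.norm_eq_abs, abs_le]
    exact ⟨by linarith [(hf p).1], (hf p).2⟩

include hf in
lemma int_nonneg (hA : MeasurableSet A) (hB : MeasurableSet B) :
    0 ≤ ∫ p in A ×ˢ B, f p :=
  setIntegral_nonneg (hA.prod hB) (fun p _ => (hf p).1)

include hmeas hf in
lemma int_le_vol (hA : MeasurableSet A) (hB : MeasurableSet B)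
    (hAf : volume A ≠ ⊤) (hBf : volume B ≠ ⊤) :
    ∫ p in A ×ˢ B, f p ≤ (volume A).toReal * (volume B).toReal := by
  have h1 : ∫ p in A ×ˢ B, f p ≤ ∫ _p in A ×ˢ B, (1:ℝ) := by
    apply setIntegral_mono_on (integrableOn_prod hmeas hf hAf hBf)
      (integrableOn_const ?_) (hA.prod hB) (fun p _ => (hf p).2)
    rw [volume_prod_set]
    exact ENNReal.mul_ne_top hAf hBf
  rw [setIntegral_const, smul_eq_mul, mul_one, measureReal_def, volume_prod_set, ENNReal.toReal_mul] at h1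
  exact h1

include hmeas hf in
lemma int_mono (hA' : MeasurableSet A') (hB' : MeasurableSet B')
    (hAf : volume A' ≠ ⊤) (hBf : volume B' ≠ ⊤) (hAA : A ⊆ A') (hBB : B ⊆ B') :
    ∫ p in A ×ˢ B, f p ≤ ∫ p in A' ×ˢ B', f p := by
  apply setIntegral_mono_set (integrableOn_prod hmeas hf hAf hBf)
  · filter_upwards with p using (hf p).1
  · exact Filter.Eventually.of_forall (Set.prod_mono hAA hBB)

include hmeas hf in
lemma int_diff_le (hA : MeasurableSet A) (hB : MeasurableSet B)
    (hA' : MeasurableSet A') (hB' : MeasurableSet B')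
    (hAf : volume A' ≠ ⊤) (hBf : volume B' ≠ ⊤) (hAA : A ⊆ A') (hBB : B ⊆ B') :
    (∫ p in A' ×ˢ B', f p) - ∫ p in A ×ˢ B, f p ≤
      (volume A').toReal * (volume B').toReal - (volume A).toReal * (volume B).toReal := by
  have hsub : A ×ˢ B ⊆ A' ×ˢ B' := Set.prod_mono hAA hBB
  have hfin : volume (A' ×ˢ B') ≠ ⊤ := by
    rw [volume_prod_set]; exact ENNReal.mul_ne_top hAf hBf
  have hd : (∫ p in (A' ×ˢ B') \ (A ×ˢ B), f p)
      = (∫ p in A' ×ˢ B', f p) - ∫ p in A ×ˢ B, f p := by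
    apply integral_diff (hA.prod hB) (integrableOn_prod hmeas hf hAf hBf) hsub
  rw [← hd]
  have hm : MeasurableSet ((A' ×ˢ B') \ (A ×ˢ B)) := (hA'.prod hB').diff (hA.prod hB)
  have h1 : (∫ p in (A' ×ˢ B') \ (A ×ˢ B), f p) ≤ ∫ _p in (A' ×ˢ B') \ (A ×ˢ B), (1:ℝ) := by
    apply setIntegral_mono_on
      ((integrableOn_prod hmeas hf hAf hBf).mono_set Set.diff_subset)
      (integrableOn_const (ne_top_of_le_ne_top hfin (measure_mono Set.diff_subset))) hm (fun p _ => (hf p).2)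
  rw [setIntegral_const, smul_eq_mul, mul_one] at h1
  refine h1.trans ?_
  have hAfin : volume A ≠ ⊤ := fun h => hAf (top_le_iff.1 (h ▸ measure_mono hAA))
  have hBfin : volume B ≠ ⊤ := fun h => hBf (top_le_iff.1 (h ▸ measure_mono hBB))
  rw [measureReal_def, measure_diff hsub (hA.prod hB).nullMeasurableSet
    (by rw [volume_prod_set]; exact ENNReal.mul_ne_top hAfin hBfin),
    ENNReal.toReal_sub_of_le (measure_mono hsub) hfin, volume_prod_set, volume_prod_set,
    ENNReal.toReal_mul, ENNReal.toReal_mul]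
end IntBasics


section DBox
variable {f : ℝ × ℝ → ℝ} (hmeas : Measurable f) (hf : ∀ p, f p ∈ Set.Icc (0:ℝ) 1)
variable {A B A' B' : Set ℝ}


include hf in
lemma dBox_nonneg (hA : MeasurableSet A) (hB : MeasurableSet B) : 0 ≤ dBox f A B := by
  exact div_nonneg (int_nonneg hf hA hB)
    (mul_nonneg ENNReal.toReal_nonneg ENNReal.toReal_nonneg)

include hmeas hf in
lemma dBox_le_one (hA : MeasurableSet A) (hB : MeasurableSet B)
    (hAf : volume A ≠ ⊤) (hBf : volume B ≠ ⊤) : dBox f A B ≤ 1 := by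
  rcases eq_or_lt_of_le (mul_nonneg (ENNReal.toReal_nonneg (a := volume A))
    (ENNReal.toReal_nonneg (a := volume B))) with h | h
  · rw [dBox, ← h, div_zero]; exact zero_le_one
  · rw [dBox, div_le_one h]
    exact int_le_vol hmeas hf hA hB hAf hBf

include hmeas hf in
lemma dBox_err (hA : MeasurableSet A) (hB : MeasurableSet B)
    (hA' : MeasurableSet A') (hB' : MeasurableSet B')
    (hAf : volume A' ≠ ⊤) (hBf : volume B' ≠ ⊤) (hAA : A ⊆ A') (hBB : B ⊆ B')
    (ha : 0 < (volume A).toReal) (hb : 0 < (volume B).toReal) :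
    |dBox f A' B' - dBox f A B| ≤
      ((volume A').toReal * (volume B').toReal - (volume A).toReal * (volume B).toReal) /
        ((volume A').toReal * (volume B').toReal) := by
  set a := (volume A).toReal with hadef
  set b := (volume B).toReal with hbdef
  set a' := (volume A').toReal with ha'def
  set b' := (volume B').toReal with hb'def
  have hAfin : volume A ≠ ⊤ := fun h => hAf (top_le_iff.1 (h ▸ measure_mono hAA))
  have hBfin : volume B ≠ ⊤ := fun h => hBf (top_le_iff.1 (h ▸ measure_mono hBB))
  have haa' : a ≤ a' := ENNReal.toReal_mono hAf (measure_mono hAA)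
  have hbb' : b ≤ b' := ENNReal.toReal_mono hBf (measure_mono hBB)
  have hab : 0 < a * b := mul_pos ha hb
  have hab' : 0 < a' * b' := mul_pos (ha.trans_le haa') (hb.trans_le hbb')
  have habab : a * b ≤ a' * b' := mul_le_mul haa' hbb' hb.le (ha.trans_le haa').le
  set I := ∫ p in A ×ˢ B, f p with hIdef
  set I' := ∫ p in A' ×ˢ B', f p with hI'def
  have hI0 : 0 ≤ I := int_nonneg hf hA hB
  have hIab : I ≤ a * b := int_le_vol hmeas hf hA hB hAfin hBfin
  have hII' : I ≤ I' := int_mono hmeas hf hA' hB' hAf hBf hAA hBB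
  have hdiff : I' - I ≤ a' * b' - a * b :=
    int_diff_le hmeas hf hA hB hA' hB' hAf hBf hAA hBB
  rw [dBox, dBox, ← hIdef, ← hI'def, ← hadef, ← hbdef, ← ha'def, ← hb'def, abs_le]
  constructor
  · rw [neg_le, neg_sub]
    rw [div_sub_div _ _ (ne_of_gt hab) (ne_of_gt hab'), div_le_div_iff₀ (by positivity) hab']
    nlinarith [mul_le_mul_of_nonneg_right hIab (sub_nonneg.2 habab),
      mul_le_mul_of_nonneg_left hII' hab.le]
  · rw [sub_le_iff_le_add, div_add_div _ _ (ne_of_gt hab') (ne_of_gt hab),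
      div_le_div_iff₀ hab' (by positivity)]
    nlinarith [mul_le_mul_of_nonneg_right hdiff hab.le,
      mul_le_mul_of_nonneg_right hI0 (sub_nonneg.2 habab)]
end DBox
section Cells
variable {f : ℝ × ℝ → ℝ} (hmeas : Measurable f) (hf : ∀ p, f p ∈ Set.Icc (0:ℝ) 1)

lemma prod_biUnion_eq (S T : Finset ℕ) (Ag Bg : ℕ → Set ℝ) :
    (⋃ s ∈ S, Ag s) ×ˢ (⋃ t ∈ T, Bg t) = ⋃ p ∈ S ×ˢ T, Ag p.1 ×ˢ Bg p.2 := by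
  ext ⟨x, y⟩
  simp only [Set.mem_prod, Set.mem_iUnion, Finset.mem_product]
  constructor
  · rintro ⟨⟨s, hs, hx⟩, ⟨t, ht, hy⟩⟩
    exact ⟨(s, t), ⟨hs, ht⟩, hx, hy⟩
  · rintro ⟨⟨s, t⟩, ⟨hs, ht⟩, hx, hy⟩
    exact ⟨⟨s, hs, hx⟩, ⟨t, ht, hy⟩⟩

lemma volume_biUnion_cells (n : ℕ) (hn : 0 < n) (S : Finset ℕ) (g : ℕ → ℕ)
    (hg : Set.InjOn g S) :
    (volume (⋃ s ∈ S, cell n (g s))).toReal = S.card / n := by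
  rw [measure_biUnion_finset ?hd (fun s _ => cell_measurable n (g s))]
  · rw [ENNReal.toReal_sum (fun s _ => by rw [volume_cell n _ hn]; exact ENNReal.ofReal_ne_top)]
    simp_rw [volume_cell_toReal _ _ hn]
    rw [Finset.sum_const, nsmul_eq_mul, mul_one_div]
  · intro s hs t ht hst
    exact cell_disjoint n (fun h => hst (hg hs ht h))

include hmeas hf in
lemma integral_biUnion_cells (n : ℕ) (hn : 0 < n) (S T : Finset ℕ) (gA gB : ℕ → ℕ)
    (hgA : Set.InjOn gA S) (hgB : Set.InjOn gB T) :
    ∫ p in (⋃ s ∈ S, cell n (gA s)) ×ˢ (⋃ t ∈ T, cell n (gB t)), f p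
      = ∑ s ∈ S, ∑ t ∈ T, ∫ p in cell n (gA s) ×ˢ cell n (gB t), f p := by
  rw [prod_biUnion_eq]
  rw [MeasureTheory.integral_biUnion_finset (S ×ˢ T)
    (fun p _ => (cell_measurable n (gA p.1)).prod (cell_measurable n (gB p.2))) ?hd
    (fun p _ => integrableOn_prod hmeas hf
      (by rw [volume_cell _ _ hn]; exact ENNReal.ofReal_ne_top)
      (by rw [volume_cell _ _ hn]; exact ENNReal.ofReal_ne_top))]
  · rw [Finset.sum_product]
  · rintro ⟨s, t⟩ hst ⟨s', t'⟩ hs't' hne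
    simp only [Finset.mem_coe, Finset.mem_product] at hst hs't'
    rcases eq_or_ne s s' with rfl | hss
    · have htt : t ≠ t' := fun h => hne (by rw [h])
      have : Disjoint (cell n (gB t)) (cell n (gB t')) :=
        cell_disjoint n (fun h => htt (hgB hst.2 hs't'.2 h))
      rw [Set.disjoint_left] at this
      simp only [Function.onFun, Set.disjoint_left]
      rintro ⟨x, y⟩ ⟨_, h2⟩ ⟨_, h4⟩
      exact this h2 h4
    · have : Disjoint (cell n (gA s)) (cell n (gA s')) :=
        cell_disjoint n (fun h => hss (hgA hst.1 hs't'.1 h))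
      rw [Set.disjoint_left] at this
      simp only [Function.onFun, Set.disjoint_left]
      rintro ⟨x, y⟩ ⟨h1, _⟩ ⟨h3, _⟩
      exact this h1 h3

end Cells
open scoped Classical in
lemma witness_approx {k q : ℕ} (hk : 0 < k) (hq : 0 < q) (i : ℕ) {A : Set ℝ}
    (hA : A ⊆ cell k i) (hAo : A.OrdConnected) (hA0 : 0 < (volume A).toReal) :
    ∃ S : Finset ℕ, S ⊆ Finset.range q ∧ S.Nonempty ∧
      A ⊆ (⋃ a ∈ S, cell (k*q) (i*q+a)) ∧
      (volume (⋃ a ∈ S, cell (k*q) (i*q+a))).toReal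
        ≤ (volume A).toReal + 2/((k*q : ℕ):ℝ) := by
  have hkq : 0 < k * q := Nat.mul_pos hk hq
  have hkq' : (0:ℝ) < ((k*q : ℕ):ℝ) := by exact_mod_cast hkq
  set S : Finset ℕ := (Finset.range q).filter
    (fun a => (A ∩ cell (k*q) (i*q+a)).Nonempty) with hSdef
  have hScov : A ⊆ ⋃ a ∈ S, cell (k*q) (i*q+a) := by
    intro x hx
    have hx' : x ∈ cell k i := hA hx
    rw [cell_eq_biUnion hk hq i, Set.mem_iUnion₂] at hx'
    obtain ⟨a, ha, hxa⟩ := hx'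
    rw [Set.mem_iUnion₂]
    exact ⟨a, Finset.mem_filter.2 ⟨ha, ⟨x, hx, hxa⟩⟩, hxa⟩
  have hAne : A.Nonempty := by
    by_contra h
    rw [Set.not_nonempty_iff_eq_empty] at h
    rw [h] at hA0; simp at hA0
  have hSne : S.Nonempty := by
    obtain ⟨x, hx⟩ := hAne
    have hx2 := hScov hx
    rw [Set.mem_iUnion₂] at hx2
    obtain ⟨a, ha, _⟩ := hx2
    exact ⟨a, ha⟩
  refine ⟨S, Finset.filter_subset _ _, hSne, hScov, ?_⟩
  set a0 := S.min' hSne with ha0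
  set a1 := S.max' hSne with ha1
  have hsub : (⋃ a ∈ S, cell (k*q) (i*q+a))
      ⊆ A ∪ cell (k*q) (i*q+a0) ∪ cell (k*q) (i*q+a1) := by
    intro x hx
    rw [Set.mem_iUnion₂] at hx
    obtain ⟨a, haS, hxa⟩ := hx
    rcases eq_or_ne a a0 with rfl | hne0
    · exact Or.inl (Or.inr hxa)
    rcases eq_or_ne a a1 with rfl | hne1
    · exact Or.inr hxa
    have h0a : a0 < a := lt_of_le_of_ne (S.min'_le a haS) (Ne.symm hne0)
    have h1a : a < a1 := lt_of_le_of_ne (S.le_max' a haS) hne1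
    obtain ⟨y0, hy0A, hy0c⟩ := (Finset.mem_filter.1 (S.min'_mem hSne)).2
    obtain ⟨y1, hy1A, hy1c⟩ := (Finset.mem_filter.1 (S.max'_mem hSne)).2
    left; left
    refine hAo.out hy0A hy1A ⟨?_, ?_⟩
    · have h1 : y0 < (((i*q+a0 : ℕ):ℝ)+1)/((k*q:ℕ):ℝ) := hy0c.2
      have hc : ((i*q+a0 : ℕ):ℝ) + 1 ≤ ((i*q+a : ℕ):ℝ) := by
        have : i*q+a0+1 ≤ i*q+a := by omega
        exact_mod_cast this
      have h2 : (((i*q+a0 : ℕ):ℝ)+1)/((k*q:ℕ):ℝ) ≤ ((i*q+a : ℕ):ℝ)/((k*q:ℕ):ℝ) := by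
        gcongr
      exact le_of_lt (lt_of_lt_of_le h1 (le_trans h2 hxa.1))
    · have h1 : x < (((i*q+a : ℕ):ℝ)+1)/((k*q:ℕ):ℝ) := hxa.2
      have hc : ((i*q+a : ℕ):ℝ) + 1 ≤ ((i*q+a1 : ℕ):ℝ) := by
        have : i*q+a+1 ≤ i*q+a1 := by omega
        exact_mod_cast this
      have h2 : (((i*q+a : ℕ):ℝ)+1)/((k*q:ℕ):ℝ) ≤ ((i*q+a1 : ℕ):ℝ)/((k*q:ℕ):ℝ) := by
        gcongr
      exact le_of_lt (lt_of_lt_of_le h1 (le_trans h2 hy1c.1))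
  have hvol : volume (⋃ a ∈ S, cell (k*q) (i*q+a))
      ≤ volume A + ENNReal.ofReal (1/((k*q:ℕ):ℝ)) + ENNReal.ofReal (1/((k*q:ℕ):ℝ)) := by
    calc volume (⋃ a ∈ S, cell (k*q) (i*q+a))
        ≤ volume (A ∪ cell (k*q) (i*q+a0) ∪ cell (k*q) (i*q+a1)) := measure_mono hsub
      _ ≤ volume (A ∪ cell (k*q) (i*q+a0)) + volume (cell (k*q) (i*q+a1)) :=
          measure_union_le _ _
      _ ≤ volume A + volume (cell (k*q) (i*q+a0)) + volume (cell (k*q) (i*q+a1)) :=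
          add_le_add_left (measure_union_le _ _) _
      _ = volume A + ENNReal.ofReal (1/((k*q:ℕ):ℝ)) + ENNReal.ofReal (1/((k*q:ℕ):ℝ)) := by
          rw [volume_cell _ _ hkq, volume_cell _ _ hkq]
  have hAfin : volume A ≠ ⊤ := by
    refine ne_top_of_le_ne_top ?_ (measure_mono hA)
    rw [volume_cell _ _ hk]
    exact ENNReal.ofReal_ne_top
  calc (volume (⋃ a ∈ S, cell (k*q) (i*q+a))).toReal
      ≤ (volume A + ENNReal.ofReal (1/((k*q:ℕ):ℝ)) + ENNReal.ofReal (1/((k*q:ℕ):ℝ))).toReal := by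
        apply ENNReal.toReal_mono ?_ hvol
        exact ENNReal.add_ne_top.2 ⟨ENNReal.add_ne_top.2 ⟨hAfin, ENNReal.ofReal_ne_top⟩,
          ENNReal.ofReal_ne_top⟩
    _ = (volume A).toReal + 1/((k*q:ℕ):ℝ) + 1/((k*q:ℕ):ℝ) := by
        rw [ENNReal.toReal_add (ENNReal.add_ne_top.2 ⟨hAfin, ENNReal.ofReal_ne_top⟩)
          ENNReal.ofReal_ne_top, ENNReal.toReal_add hAfin ENNReal.ofReal_ne_top,
          ENNReal.toReal_ofReal (by positivity)]
    _ = (volume A).toReal + 2/((k*q:ℕ):ℝ) := by ring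
section Refine
variable {f : ℝ × ℝ → ℝ} (hmeas : Measurable f) (hf : ∀ p, f p ∈ Set.Icc (0:ℝ) 1)

lemma dBox_cell_eq (n : ℕ) (hn : 0 < n) (s t : ℕ) :
    dBox f (cell n s) (cell n t) = (n:ℝ)^2 * ∫ p in cell n s ×ˢ cell n t, f p := by
  have hn' : (0:ℝ) < n := by exact_mod_cast hn
  rw [dBox, volume_cell_toReal _ _ hn, volume_cell_toReal _ _ hn]
  field_simp

include hmeas hf in
lemma sum_refine_eq {k q : ℕ} (hk : 0 < k) (hq : 0 < q) (i j : ℕ) :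
    ∑ a ∈ Finset.range q, ∑ b ∈ Finset.range q,
        dBox f (cell (k*q) (i*q+a)) (cell (k*q) (j*q+b))
      = (q:ℝ)^2 * dBox f (cell k i) (cell k j) := by
  have hkq : 0 < k * q := Nat.mul_pos hk hq
  have hk' : (0:ℝ) < k := by exact_mod_cast hk
  have hq' : (0:ℝ) < q := by exact_mod_cast hq
  have hint : ∫ p in cell k i ×ˢ cell k j, f p
      = ∑ a ∈ Finset.range q, ∑ b ∈ Finset.range q,
          ∫ p in cell (k*q) (i*q+a) ×ˢ cell (k*q) (j*q+b), f p := by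
    rw [cell_eq_biUnion hk hq i, cell_eq_biUnion hk hq j]
    exact integral_biUnion_cells hmeas hf (k*q) hkq _ _ _ _
      (fun a _ b _ h => by omega) (fun a _ b _ h => by omega)
  rw [dBox_cell_eq _ hk, hint]
  simp_rw [dBox_cell_eq _ hkq, Finset.mul_sum]
  apply Finset.sum_congr rfl; intro a _
  apply Finset.sum_congr rfl; intro b _
  push_cast
  ring

include hmeas hf in
lemma dBox_biUnion_avg (n : ℕ) (hn : 0 < n) (S T : Finset ℕ) (gA gB : ℕ → ℕ)
    (hgA : Set.InjOn gA S) (hgB : Set.InjOn gB T) (hS : S.Nonempty) (hT : T.Nonempty) :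
    dBox f (⋃ s ∈ S, cell n (gA s)) (⋃ t ∈ T, cell n (gB t))
      = (∑ s ∈ S, ∑ t ∈ T, dBox f (cell n (gA s)) (cell n (gB t)))
          / ((S.card : ℝ) * T.card) := by
  have hn' : (0:ℝ) < n := by exact_mod_cast hn
  have hcS : (0:ℝ) < S.card := by exact_mod_cast Finset.card_pos.2 hS
  have hcT : (0:ℝ) < T.card := by exact_mod_cast Finset.card_pos.2 hT
  rw [dBox, volume_biUnion_cells n hn S gA hgA, volume_biUnion_cells n hn T gB hgB,
    integral_biUnion_cells hmeas hf n hn S T gA gB hgA hgB]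
  simp_rw [dBox_cell_eq _ hn]
  have hpull : ∑ s ∈ S, ∑ t ∈ T,
      (n:ℝ)^2 * ∫ p in cell n (gA s) ×ˢ cell n (gB t), f p
      = (n:ℝ)^2 * ∑ s ∈ S, ∑ t ∈ T, ∫ p in cell n (gA s) ×ˢ cell n (gB t), f p := by
    rw [Finset.mul_sum]
    exact Finset.sum_congr rfl (fun s _ => (Finset.mul_sum _ _ _).symm)
  rw [hpull]
  have hnne : (n:ℝ) ≠ 0 := ne_of_gt hn'
  field_simp

end Refine
lemma cs_product {α : Type*} (P Q : Finset α) (hQP : Q ⊆ P) (g : α → ℝ) (D c : ℝ)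
    (havg : ∑ p ∈ Q, g p = (Q.card : ℝ) * c) (htot : ∑ p ∈ P, g p = (P.card : ℝ) * D)
    (hQ : 0 < Q.card) :
    (P.card : ℝ) * D^2 + (Q.card : ℝ) * (c - D)^2 ≤ ∑ p ∈ P, (g p)^2 := by
  have hQ' : (0:ℝ) < Q.card := by exact_mod_cast hQ
  have h1 : ∑ p ∈ P, (g p - D)^2 = ∑ p ∈ P, (g p)^2 - (P.card : ℝ) * D^2 := by
    simp_rw [sub_sq]
    rw [Finset.sum_add_distrib, Finset.sum_sub_distrib, Finset.sum_const, nsmul_eq_mul]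
    have h2g : ∑ x ∈ P, 2 * g x * D = 2 * ((P.card : ℝ) * D) * D := by
      rw [show (2:ℝ) * ((P.card : ℝ) * D) * D = (∑ p ∈ P, g p) * (2*D) from by rw [htot]; ring,
        Finset.sum_mul]
      exact Finset.sum_congr rfl (fun x _ => by ring)
    rw [h2g]
    ring
  have h2 : ∑ p ∈ Q, (g p - D) = (Q.card : ℝ) * (c - D) := by
    rw [Finset.sum_sub_distrib, havg, Finset.sum_const, nsmul_eq_mul]
    ring
  have h3 : (∑ p ∈ Q, (g p - D))^2 ≤ (Q.card : ℝ) * ∑ p ∈ Q, (g p - D)^2 :=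
    sq_sum_le_card_mul_sum_sq
  have h4 : ∑ p ∈ Q, (g p - D)^2 ≤ ∑ p ∈ P, (g p - D)^2 :=
    Finset.sum_le_sum_of_subset_of_nonneg hQP (fun p _ _ => sq_nonneg _)
  rw [h2] at h3
  nlinarith [sq_nonneg ((Q.card : ℝ) * (c - D))]

section Increment
variable {f : ℝ × ℝ → ℝ} (hmeas : Measurable f) (hf : ∀ p, f p ∈ Set.Icc (0:ℝ) 1)

include hmeas hf in
lemma pair_refine {k q : ℕ} (hk : 0 < k) (hq : 0 < q) (i j : ℕ) :
    (q:ℝ)^2 * (dBox f (cell k i) (cell k j))^2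
      ≤ ∑ a ∈ Finset.range q, ∑ b ∈ Finset.range q,
          (dBox f (cell (k*q) (i*q+a)) (cell (k*q) (j*q+b)))^2 := by
  classical
  have hP := cs_product ((Finset.range q) ×ˢ (Finset.range q)) ((Finset.range q) ×ˢ (Finset.range q))
    (subset_refl _) (fun p => dBox f (cell (k*q) (i*q+p.1)) (cell (k*q) (j*q+p.2)))
    (dBox f (cell k i) (cell k j)) (dBox f (cell k i) (cell k j)) ?_ ?_ ?_
  · rw [Finset.sum_product] at hP
    rw [Finset.card_product, Finset.card_range] at hP
    push_cast at hP ⊢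
    nlinarith [hP]
  · rw [Finset.sum_product, Finset.card_product, Finset.card_range,
      sum_refine_eq hmeas hf hk hq i j]
    push_cast; ring
  · rw [Finset.sum_product, Finset.card_product, Finset.card_range,
      sum_refine_eq hmeas hf hk hq i j]
    push_cast; ring
  · simp only [Finset.card_product, Finset.card_range]
    positivity
end Increment
section Increment2
variable {f : ℝ × ℝ → ℝ} (hmeas : Measurable f) (hf : ∀ p, f p ∈ Set.Icc (0:ℝ) 1)

include hmeas hf in
lemma pair_increment {ε : ℝ} (hε0 : 0 < ε) (hε1 : ε ≤ 1) {k q : ℕ} (hk : 0 < k) (hq : 0 < q)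
    (hq16 : 16 ≤ (q:ℝ) * ε^3) (i j : ℕ)
    (hirr : ¬ IntervalRegularPair f ε (cell k i) (cell k j)) :
    (q:ℝ)^2 * (dBox f (cell k i) (cell k j))^2 + (q:ℝ)^2 * ε^4/4
      ≤ ∑ a ∈ Finset.range q, ∑ b ∈ Finset.range q,
          (dBox f (cell (k*q) (i*q+a)) (cell (k*q) (j*q+b)))^2 := by
  classical
  have hkq : 0 < k * q := Nat.mul_pos hk hq
  have hk' : (0:ℝ) < k := by exact_mod_cast hk
  have hq' : (0:ℝ) < q := by exact_mod_cast hq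
  have hkq' : (0:ℝ) < ((k*q : ℕ):ℝ) := by exact_mod_cast hkq
  rw [IntervalRegularPair] at hirr
  push_neg at hirr
  obtain ⟨A, B, hAsub, hBsub, hAo, hBo, hAvol, hBvol, hd⟩ := hirr
  rw [volume_cell_toReal _ _ hk] at hAvol hBvol
  have ha0 : 0 < (volume A).toReal := lt_of_lt_of_le (by positivity) hAvol
  have hb0 : 0 < (volume B).toReal := lt_of_lt_of_le (by positivity) hBvol
  obtain ⟨SA, hSAr, hSAne, hSAcov, hSAvol⟩ := witness_approx hk hq i hAsub hAo ha0
  obtain ⟨SB, hSBr, hSBne, hSBcov, hSBvol⟩ := witness_approx hk hq j hBsub hBo hb0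
  set UA := ⋃ a ∈ SA, cell (k*q) (i*q+a) with hUAdef
  set UB := ⋃ b ∈ SB, cell (k*q) (j*q+b) with hUBdef
  have hUAsub : UA ⊆ cell k i :=
    Set.iUnion₂_subset (fun a ha => cell_subset_cell hk hq (Finset.mem_range.1 (hSAr ha)))
  have hUBsub : UB ⊆ cell k j :=
    Set.iUnion₂_subset (fun b hb => cell_subset_cell hk hq (Finset.mem_range.1 (hSBr hb)))
  have hUAm : MeasurableSet UA := SA.measurableSet_biUnion (fun a _ => cell_measurable _ _)
  have hUBm : MeasurableSet UB := SB.measurableSet_biUnion (fun b _ => cell_measurable _ _)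
  have hcellfin : ∀ s : ℕ, volume (cell k s) ≠ ⊤ := fun s => by
    rw [volume_cell _ _ hk]; exact ENNReal.ofReal_ne_top
  have hUAfin : volume UA ≠ ⊤ := ne_top_of_le_ne_top (hcellfin i) (measure_mono hUAsub)
  have hUBfin : volume UB ≠ ⊤ := ne_top_of_le_ne_top (hcellfin j) (measure_mono hUBsub)
  have hUAvol : (volume UA).toReal = (SA.card : ℝ) / ((k*q:ℕ):ℝ) :=
    volume_biUnion_cells (k*q) hkq SA _ (fun a _ b _ h => by omega)
  have hUBvol : (volume UB).toReal = (SB.card : ℝ) / ((k*q:ℕ):ℝ) :=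
    volume_biUnion_cells (k*q) hkq SB _ (fun a _ b _ h => by omega)
  have haa' : (volume A).toReal ≤ (volume UA).toReal :=
    ENNReal.toReal_mono hUAfin (measure_mono hSAcov)
  have hbb' : (volume B).toReal ≤ (volume UB).toReal :=
    ENNReal.toReal_mono hUBfin (measure_mono hSBcov)
  have hUAle : (volume UA).toReal ≤ 1/(k:ℝ) := by
    rw [← volume_cell_toReal k i hk]
    exact ENNReal.toReal_mono (hcellfin i) (measure_mono hUAsub)
  have hUBle : (volume UB).toReal ≤ 1/(k:ℝ) := by
    rw [← volume_cell_toReal k j hk]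
    exact ENNReal.toReal_mono (hcellfin j) (measure_mono hUBsub)
  have hAle : (volume A).toReal ≤ 1/(k:ℝ) := le_trans haa' hUAle
  have hBle : (volume B).toReal ≤ 1/(k:ℝ) := le_trans hbb' hUBle
  -- error bound
  have herr := dBox_err hmeas hf hAo.measurableSet hBo.measurableSet hUAm hUBm
    hUAfin hUBfin hSAcov hSBcov ha0 hb0
  have hkqcast : ((k*q:ℕ):ℝ) = (k:ℝ)*q := by push_cast; ring
  have herr2 : |dBox f UA UB - dBox f A B| ≤ ε/4 := by
    refine le_trans herr ?_
    set a := (volume A).toReal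
    set b := (volume B).toReal
    set a' := (volume UA).toReal
    set b' := (volume UB).toReal
    have hnum : a'*b' - a*b ≤ 4/((k:ℝ)^2*q) := by
      have e1 : a' - a ≤ 2/((k:ℝ)*q) := by rw [← hkqcast]; linarith [hSAvol]
      have e2 : b' - b ≤ 2/((k:ℝ)*q) := by rw [← hkqcast]; linarith [hSBvol]
      have : a'*b' - a*b = a'*(b'-b) + b*(a'-a) := by ring
      rw [this]
      have h1 : a'*(b'-b) ≤ (1/(k:ℝ))*(2/((k:ℝ)*q)) :=
        mul_le_mul hUAle e2 (by linarith) (by positivity)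
      have h2 : b*(a'-a) ≤ (1/(k:ℝ))*(2/((k:ℝ)*q)) :=
        mul_le_mul (le_trans hBle le_rfl) e1 (by linarith) (by positivity)
      calc a'*(b'-b) + b*(a'-a) ≤ (1/(k:ℝ))*(2/((k:ℝ)*q)) + (1/(k:ℝ))*(2/((k:ℝ)*q)) := by
            linarith
        _ = 4/((k:ℝ)^2*q) := by field_simp; ring
    have hden : ε^2/(k:ℝ)^2 ≤ a'*b' := by
      have h1 : ε * (1/(k:ℝ)) ≤ a' := le_trans hAvol haa'
      have h2 : ε * (1/(k:ℝ)) ≤ b' := le_trans hBvol hbb'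
      calc ε^2/(k:ℝ)^2 = (ε*(1/(k:ℝ)))*(ε*(1/(k:ℝ))) := by field_simp
        _ ≤ a'*b' := mul_le_mul h1 h2 (by positivity) (by linarith [ha0, haa'])
    have hnum0 : 0 ≤ a'*b' - a*b := by
      have := mul_le_mul haa' hbb' hb0.le (by linarith [ha0, haa'])
      linarith
    have hden0 : (0:ℝ) < ε^2/(k:ℝ)^2 := by positivity
    calc (a'*b' - a*b)/(a'*b') ≤ (4/((k:ℝ)^2*q))/(ε^2/(k:ℝ)^2) :=
          div_le_div₀ (by positivity) hnum hden0 hden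
      _ = 4/((q:ℝ)*ε^2) := by field_simp
      _ ≤ ε/4 := by
          rw [div_le_div_iff₀ (by positivity) (by norm_num)]
          nlinarith
  -- distance of union density from coarse density
  set D := dBox f (cell k i) (cell k j) with hDdef
  set c := dBox f UA UB with hcdef
  have h2 : ε/2 ≤ |c - D| := by
    have htri : |dBox f A B - D| ≤ |dBox f A B - c| + |c - D| := abs_sub_le _ _ _
    rw [abs_sub_comm (dBox f A B) c] at htri
    linarith
  -- cardinality lower bounds
  have hSAcard : ε*(q:ℝ) ≤ SA.card := by
    have h := le_trans (le_trans hAvol haa') (le_of_eq hUAvol)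
    rw [hkqcast, mul_one_div, div_le_div_iff₀ hk' (by positivity)] at h
    nlinarith
  have hSBcard : ε*(q:ℝ) ≤ SB.card := by
    have h := le_trans (le_trans hBvol hbb') (le_of_eq hUBvol)
    rw [hkqcast, mul_one_div, div_le_div_iff₀ hk' (by positivity)] at h
    nlinarith
  have hcSA : (0:ℝ) < SA.card := by exact_mod_cast Finset.card_pos.2 hSAne
  have hcSB : (0:ℝ) < SB.card := by exact_mod_cast Finset.card_pos.2 hSBne
  -- average identity
  have havg := dBox_biUnion_avg hmeas hf (k*q) hkq SA SB (fun a => i*q+a) (fun b => j*q+b)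
    (fun a _ b _ h => by have h' : i*q+a = i*q+b := h; omega)
    (fun a _ b _ h => by have h' : j*q+a = j*q+b := h; omega) hSAne hSBne
  rw [← hUAdef, ← hUBdef, ← hcdef] at havg
  have havg' : ∑ p ∈ SA ×ˢ SB,
      dBox f (cell (k*q) (i*q+p.1)) (cell (k*q) (j*q+p.2))
      = ((SA ×ˢ SB).card : ℝ) * c := by
    rw [Finset.sum_product, Finset.card_product]
    rw [havg]
    push_cast
    field_simp
  have htot' : ∑ p ∈ (Finset.range q) ×ˢ (Finset.range q),
      dBox f (cell (k*q) (i*q+p.1)) (cell (k*q) (j*q+p.2))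
      = (((Finset.range q) ×ˢ (Finset.range q)).card : ℝ) * D := by
    rw [Finset.sum_product, Finset.card_product, Finset.card_range,
      sum_refine_eq hmeas hf hk hq i j, ← hDdef]
    push_cast
    ring
  have hcs := cs_product ((Finset.range q) ×ˢ (Finset.range q)) (SA ×ˢ SB)
    (Finset.product_subset_product hSAr hSBr)
    (fun p => dBox f (cell (k*q) (i*q+p.1)) (cell (k*q) (j*q+p.2))) D c havg' htot'
    (by rw [Finset.card_product]
        exact Nat.mul_pos (Finset.card_pos.2 hSAne) (Finset.card_pos.2 hSBne))
  rw [Finset.sum_product, Finset.card_product, Finset.card_product, Finset.card_range] at hcs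
  have hsq : (ε/2)^2 ≤ (c - D)^2 := by
    have h3 := pow_le_pow_left₀ (by positivity : (0:ℝ) ≤ ε/2) h2 2
    rwa [sq_abs] at h3
  have hcard2 : (q:ℝ)^2*ε^2 ≤ ((SA.card : ℝ) * SB.card) := by
    have hmm := mul_le_mul hSAcard hSBcard (by positivity) hcSA.le
    nlinarith
  have hfinal : (q:ℝ)^2 * ε^4/4 ≤ ((SA.card : ℝ) * SB.card) * (c - D)^2 := by
    calc (q:ℝ)^2 * ε^4/4 = ((q:ℝ)^2*ε^2) * ((ε/2)^2) := by ring
      _ ≤ ((SA.card : ℝ) * SB.card) * (c - D)^2 :=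
          mul_le_mul hcard2 hsq (by positivity) (by positivity)
  push_cast at hcs
  nlinarith [hcs, hfinal]
end Increment2
lemma sum_range_mul {M : Type*} [AddCommMonoid M] (k q : ℕ) (h : ℕ → M) :
    ∑ s ∈ Finset.range (k*q), h s = ∑ i ∈ Finset.range k, ∑ a ∈ Finset.range q, h (i*q+a) := by
  rcases Nat.eq_zero_or_pos q with rfl | hq
  · simp
  rw [← Finset.sum_product']
  apply Finset.sum_nbij' (i := fun s => (s/q, s%q)) (j := fun p => p.1*q+p.2)
  · intro s hs
    simp only [Finset.mem_range] at hs
    simp only [Finset.mem_product, Finset.mem_range]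
    exact ⟨Nat.div_lt_of_lt_mul (by rwa [mul_comm] at hs), Nat.mod_lt _ hq⟩
  · rintro ⟨i, a⟩ hp
    simp only [Finset.mem_product, Finset.mem_range] at hp
    simp only [Finset.mem_range]
    calc i*q+a < i*q+q := by omega
      _ = (i+1)*q := by ring
      _ ≤ k*q := Nat.mul_le_mul_right q hp.1
  · intro s _
    simp only
    rw [mul_comm, Nat.div_add_mod]
  · rintro ⟨i, a⟩ hp
    simp only [Finset.mem_product, Finset.mem_range] at hp
    simp only [Prod.mk.injEq]
    constructor
    · rw [mul_comm i q, Nat.mul_add_div hq, Nat.div_eq_of_lt hp.2, add_zero]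
    · rw [mul_comm i q, Nat.mul_add_mod, Nat.mod_eq_of_lt hp.2]
  · intro s _
    simp only
    rw [mul_comm, Nat.div_add_mod]
noncomputable def energy (f : ℝ × ℝ → ℝ) (k : ℕ) : ℝ :=
  (∑ i ∈ Finset.range k, ∑ j ∈ Finset.range k, (dBox f (cell k i) (cell k j))^2) / (k:ℝ)^2

open scoped Classical in
noncomputable def badPairs (f : ℝ × ℝ → ℝ) (ε : ℝ) (k : ℕ) : Finset (ℕ × ℕ) :=
  ((Finset.range k) ×ˢ (Finset.range k)).filter
    (fun p => ¬ IntervalRegularPair f ε (cell k p.1) (cell k p.2))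

section Energy
variable {f : ℝ × ℝ → ℝ} (hmeas : Measurable f) (hf : ∀ p, f p ∈ Set.Icc (0:ℝ) 1)

lemma energy_nonneg (f : ℝ × ℝ → ℝ) (k : ℕ) : 0 ≤ energy f k := by
  apply div_nonneg ?_ (by positivity)
  apply Finset.sum_nonneg; intro i _
  apply Finset.sum_nonneg; intro j _
  positivity

include hmeas hf in
lemma energy_le_one {k : ℕ} (hk : 0 < k) : energy f k ≤ 1 := by
  have hk' : (0:ℝ) < k := by exact_mod_cast hk
  rw [energy, div_le_one (by positivity)]
  have hcellfin : ∀ s : ℕ, volume (cell k s) ≠ ⊤ := fun s => by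
    rw [volume_cell _ _ hk]; exact ENNReal.ofReal_ne_top
  calc ∑ i ∈ Finset.range k, ∑ j ∈ Finset.range k, (dBox f (cell k i) (cell k j))^2
      ≤ ∑ i ∈ Finset.range k, ∑ j ∈ Finset.range k, 1 := by
        apply Finset.sum_le_sum; intro i _
        apply Finset.sum_le_sum; intro j _
        have h1 := dBox_le_one hmeas hf (cell_measurable k i) (cell_measurable k j)
          (hcellfin i) (hcellfin j)
        have h0 := dBox_nonneg hf (cell_measurable k i) (cell_measurable k j)
        nlinarith
    _ = (k:ℝ)^2 := by simp; ring
end Energy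

section Step
variable {f : ℝ × ℝ → ℝ} (hmeas : Measurable f) (hf : ∀ p, f p ∈ Set.Icc (0:ℝ) 1)

include hmeas hf in
lemma energy_step {ε : ℝ} (hε0 : 0 < ε) (hε1 : ε ≤ 1) {k q : ℕ} (hk : 0 < k) (hq : 0 < q)
    (hq16 : 16 ≤ (q:ℝ) * ε^3)
    (hbad : ε * (k:ℝ)^2 < ((badPairs f ε k).card : ℝ)) :
    energy f k + ε^5/4 < energy f (k*q) := by
  classical
  have hk' : (0:ℝ) < k := by exact_mod_cast hk
  have hq' : (0:ℝ) < q := by exact_mod_cast hq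
  set P := (Finset.range k) ×ˢ (Finset.range k) with hPdef
  set S := ∑ i ∈ Finset.range k, ∑ j ∈ Finset.range k, (dBox f (cell k i) (cell k j))^2
    with hSdef
  set T := ∑ s ∈ Finset.range (k*q), ∑ t ∈ Finset.range (k*q),
    (dBox f (cell (k*q) s) (cell (k*q) t))^2 with hTdef
  have hTsplit : T = ∑ p ∈ P, ∑ a ∈ Finset.range q, ∑ b ∈ Finset.range q,
      (dBox f (cell (k*q) (p.1*q+a)) (cell (k*q) (p.2*q+b)))^2 := by
    calc T = ∑ i ∈ Finset.range k, ∑ a ∈ Finset.range q, ∑ t ∈ Finset.range (k*q),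
        (dBox f (cell (k*q) (i*q+a)) (cell (k*q) t))^2 := by
          rw [hTdef]; exact sum_range_mul k q _
      _ = ∑ i ∈ Finset.range k, ∑ a ∈ Finset.range q, ∑ j ∈ Finset.range k,
          ∑ b ∈ Finset.range q, (dBox f (cell (k*q) (i*q+a)) (cell (k*q) (j*q+b)))^2 := by
          apply Finset.sum_congr rfl; intro i _
          apply Finset.sum_congr rfl; intro a _
          exact sum_range_mul k q _
      _ = ∑ i ∈ Finset.range k, ∑ j ∈ Finset.range k, ∑ a ∈ Finset.range q,
          ∑ b ∈ Finset.range q, (dBox f (cell (k*q) (i*q+a)) (cell (k*q) (j*q+b)))^2 := by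
          apply Finset.sum_congr rfl; intro i _
          exact Finset.sum_comm
      _ = ∑ p ∈ P, ∑ a ∈ Finset.range q, ∑ b ∈ Finset.range q,
          (dBox f (cell (k*q) (p.1*q+a)) (cell (k*q) (p.2*q+b)))^2 := by
          rw [hPdef, Finset.sum_product]
  have hlow : ∀ p ∈ P, (q:ℝ)^2 * (dBox f (cell k p.1) (cell k p.2))^2
      + (if ¬ IntervalRegularPair f ε (cell k p.1) (cell k p.2) then (q:ℝ)^2*ε^4/4 else 0)
      ≤ ∑ a ∈ Finset.range q, ∑ b ∈ Finset.range q,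
          (dBox f (cell (k*q) (p.1*q+a)) (cell (k*q) (p.2*q+b)))^2 := by
    rintro ⟨i, j⟩ _
    by_cases hreg : IntervalRegularPair f ε (cell k i) (cell k j)
    · rw [if_neg (not_not_intro hreg), add_zero]
      exact pair_refine hmeas hf hk hq i j
    · rw [if_pos hreg]
      exact pair_increment hmeas hf hε0 hε1 hk hq hq16 i j hreg
  have hsum : ∑ p ∈ P, ((q:ℝ)^2 * (dBox f (cell k p.1) (cell k p.2))^2
      + (if ¬ IntervalRegularPair f ε (cell k p.1) (cell k p.2) then (q:ℝ)^2*ε^4/4 else 0))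
      ≤ T := by
    rw [hTsplit]
    exact Finset.sum_le_sum hlow
  have hsplit2 : ∑ p ∈ P, ((q:ℝ)^2 * (dBox f (cell k p.1) (cell k p.2))^2
      + (if ¬ IntervalRegularPair f ε (cell k p.1) (cell k p.2) then (q:ℝ)^2*ε^4/4 else 0))
      = (q:ℝ)^2 * S + ((badPairs f ε k).card : ℝ) * ((q:ℝ)^2*ε^4/4) := by
    rw [Finset.sum_add_distrib]
    congr 1
    · rw [hSdef, ← Finset.sum_product', hPdef, Finset.mul_sum]
    · rw [badPairs, ← Finset.sum_filter, Finset.sum_const, nsmul_eq_mul]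
  have hT : (q:ℝ)^2 * S + ((badPairs f ε k).card : ℝ) * ((q:ℝ)^2*ε^4/4) ≤ T := by
    rw [← hsplit2]; exact hsum
  have hE2 : energy f (k*q) = T / (((k:ℝ)*q)^2) := by
    rw [energy, ← hTdef]
    congr 2
    push_cast; ring
  rw [hE2, energy, ← hSdef]
  have hstep1 : S/(k:ℝ)^2 + ε^5/4
      < ((q:ℝ)^2 * S + ((badPairs f ε k).card : ℝ) * ((q:ℝ)^2*ε^4/4)) / (((k:ℝ)*q)^2) := by
    rw [div_add' _ _ _ (by positivity), div_lt_div_iff₀ (by positivity) (by positivity)]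
    set bc := ((badPairs f ε k).card : ℝ)
    nlinarith [mul_lt_mul_of_pos_right hbad
      (by positivity : (0:ℝ) < ε^4*(k:ℝ)^2*(q:ℝ)^2/4)]
  refine lt_of_lt_of_le hstep1 ?_
  exact (div_le_div_iff_of_pos_right (by positivity)).2 hT
end Step

lemma prod_ae_eq {X Y X₀ Y₀ : Set ℝ} (hX : X₀ ⊆ X) (hY : Y₀ ⊆ Y)
    (hXn : volume (X \ X₀) = 0) (hYn : volume (Y \ Y₀) = 0) :
    (X ×ˢ Y : Set (ℝ × ℝ)) =ᵐ[volume] (X₀ ×ˢ Y₀ : Set (ℝ × ℝ)) := by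
  rw [MeasureTheory.ae_eq_set]
  constructor
  · have hsub : (X ×ˢ Y : Set (ℝ × ℝ)) \ (X₀ ×ˢ Y₀) ⊆ ((X \ X₀) ×ˢ (Set.univ : Set ℝ)) ∪
        ((Set.univ : Set ℝ) ×ˢ (Y \ Y₀)) := by
      rintro ⟨x, y⟩ ⟨⟨hx, hy⟩, hn⟩
      by_cases hx0 : x ∈ X₀
      · right
        exact ⟨Set.mem_univ _, hy, fun hy0 => hn ⟨hx0, hy0⟩⟩
      · left
        exact ⟨⟨hx, hx0⟩, Set.mem_univ _⟩
    refine measure_mono_null hsub (measure_union_null ?_ ?_) <;> rw [volume_prod_set]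
    · rw [hXn, zero_mul]
    · rw [hYn, mul_zero]
  · have : (X₀ ×ˢ Y₀ : Set (ℝ × ℝ)) \ (X ×ˢ Y) = ∅ := by
      apply Set.diff_eq_empty.2
      exact Set.prod_mono hX hY
    rw [this, measure_empty]

lemma vol_eq_of_null_diff {X X₀ : Set ℝ} (h : X₀ ⊆ X) (hn : volume (X \ X₀) = 0) :
    volume X = volume X₀ := by
  apply le_antisymm ?_ (measure_mono h)
  calc volume X = volume (X₀ ∪ (X \ X₀)) := by rw [Set.union_diff_cancel h]
    _ ≤ volume X₀ + volume (X \ X₀) := measure_union_le _ _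
    _ = volume X₀ := by rw [hn, add_zero]

lemma reg_transfer (f : ℝ × ℝ → ℝ) (ε : ℝ) {I J I' J' : Set ℝ}
    (hI' : I' ⊆ I) (hJ' : J' ⊆ J) (hI'o : I'.OrdConnected) (hJ'o : J'.OrdConnected)
    (hIn : volume (I \ I') = 0) (hJn : volume (J \ J') = 0)
    (h : IntervalRegularPair f ε I' J') : IntervalRegularPair f ε I J := by
  intro A B hAI hBJ hAo hBo hAv hBv
  set A₀ := A ∩ I' with hA0def
  set B₀ := B ∩ J' with hB0def
  have hA0A : A₀ ⊆ A := Set.inter_subset_left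
  have hB0B : B₀ ⊆ B := Set.inter_subset_left
  have hAd : A \ A₀ ⊆ I \ I' := fun x hx => ⟨hAI hx.1, fun h' => hx.2 ⟨hx.1, h'⟩⟩
  have hBd : B \ B₀ ⊆ J \ J' := fun x hx => ⟨hBJ hx.1, fun h' => hx.2 ⟨hx.1, h'⟩⟩
  have hAnull : volume (A \ A₀) = 0 := measure_mono_null hAd hIn
  have hBnull : volume (B \ B₀) = 0 := measure_mono_null hBd hJn
  have hvolA : volume A = volume A₀ := vol_eq_of_null_diff hA0A hAnull
  have hvolB : volume B = volume B₀ := vol_eq_of_null_diff hB0B hBnull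
  have hvolI : volume I = volume I' := vol_eq_of_null_diff hI' hIn
  have hvolJ : volume J = volume J' := vol_eq_of_null_diff hJ' hJn
  have hdAB : dBox f A B = dBox f A₀ B₀ := by
    rw [dBox, dBox, hvolA, hvolB,
      MeasureTheory.setIntegral_congr_set (prod_ae_eq hA0A hB0B hAnull hBnull)]
  have hdIJ : dBox f I J = dBox f I' J' := by
    rw [dBox, dBox, hvolI, hvolJ,
      MeasureTheory.setIntegral_congr_set (prod_ae_eq hI' hJ' hIn hJn)]
  rw [hdAB, hdIJ]
  apply h A₀ B₀ Set.inter_subset_right Set.inter_subset_right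
    (hAo.inter hI'o) (hBo.inter hJ'o)
  · rw [← hvolI, ← hvolA]; exact hAv
  · rw [← hvolJ, ← hvolB]; exact hBv

lemma cell_subset_eqInterval {k : ℕ} (hk : 0 < k) (i : Fin k) :
    cell k i.val ⊆ eqInterval k i ∧ volume (eqInterval k i \ cell k i.val) = 0 := by
  have hk' : (0:ℝ) < k := by exact_mod_cast hk
  rw [eqInterval]
  split_ifs with h
  · have hik : (((i:ℕ):ℝ)+1)/k = 1 := by
      rw [div_eq_one_iff_eq (ne_of_gt hk')]
      rw [h]
      have : (1:ℝ) ≤ k := by exact_mod_cast hk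
      push_cast [Nat.cast_sub hk]
      ring
    constructor
    · rw [cell, hik]
      exact Set.Ico_subset_Icc_self
    · have hsub : Set.Icc (((i:ℕ):ℝ)/k) 1 \ cell k i.val ⊆ ({1} : Set ℝ) := by
        intro x hx
        rw [cell, hik] at hx
        obtain ⟨⟨h1, h2⟩, h3⟩ := hx
        simp only [Set.mem_Ico, not_and, not_lt] at h3
        exact Set.mem_singleton_iff.2 (le_antisymm h2 (h3 h1))
      exact measure_mono_null hsub Real.volume_singleton
  · constructor
    · exact subset_refl _
    · rw [show Set.Ico (((i:ℕ):ℝ)/k) ((((i:ℕ):ℝ)+1)/k) = cell k i.val from rfl,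
        Set.diff_self, measure_empty]

open scoped Classical in
/-- Interval regularity lemma for functions: there is `i < ⌈4ε⁻⁵⌉` such that with
`k = m ⌈16ε⁻³⌉^i`, all but at most `ε k²` ordered pairs of parts of the partition of `[0,1]`
into `k` equal-length intervals are interval `ε`-regular for `f`; in particular
`m ≤ k ≤ m ⌈16ε⁻³⌉^⌈4ε⁻⁵⌉`. -/
theorem interval_regularity_for_functions (ε : ℝ) (hε0 : 0 < ε) (hε1 : ε ≤ 1)
    (m : ℕ) (hm : 0 < m) (f : ℝ × ℝ → ℝ) (hmeas : Measurable f)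
    (hf : ∀ p, f p ∈ Set.Icc (0 : ℝ) 1) :
    ∃ i k : ℕ, i < ⌈4 * ε ^ (-5 : ℤ)⌉₊ ∧
      k = m * ⌈16 * ε ^ (-3 : ℤ)⌉₊ ^ i ∧
      m ≤ k ∧ k ≤ m * ⌈16 * ε ^ (-3 : ℤ)⌉₊ ^ ⌈4 * ε ^ (-5 : ℤ)⌉₊ ∧
      ((Finset.filter
          (fun p => ¬ IntervalRegularPair f ε (eqInterval k p.1) (eqInterval k p.2))
          (univ : Finset (Fin k × Fin k))).card : ℝ) ≤ ε * (k : ℝ) ^ 2 := by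

  set q := ⌈16 * ε ^ (-3 : ℤ)⌉₊ with hqdef
  set N := ⌈4 * ε ^ (-5 : ℤ)⌉₊ with hNdef
  have hz3 : ε ^ (-3 : ℤ) = (ε^3)⁻¹ := by
    rw [zpow_neg]; norm_cast
  have hz5 : ε ^ (-5 : ℤ) = (ε^5)⁻¹ := by
    rw [zpow_neg]; norm_cast
  have hq0 : 0 < q := Nat.ceil_pos.2 (by rw [hz3]; positivity)
  have hq16 : 16 ≤ (q:ℝ) * ε^3 := by
    have h := Nat.le_ceil (16 * ε ^ (-3:ℤ))
    rw [hz3] at h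
    have hε3 : (0:ℝ) < ε^3 := by positivity
    calc (16:ℝ) = 16 * (ε^3)⁻¹ * ε^3 := by field_simp
      _ ≤ (q:ℝ) * ε^3 := mul_le_mul_of_nonneg_right h hε3.le
  have hN0 : 0 < N := Nat.ceil_pos.2 (by rw [hz5]; positivity)
  have hN4 : 4 * (ε^5)⁻¹ ≤ (N:ℝ) := by
    have h := Nat.le_ceil (4 * ε ^ (-5:ℤ))
    rwa [hz5] at h
  have key : ∃ i, i < N ∧ ((badPairs f ε (m*q^i)).card : ℝ) ≤ ε * ((m*q^i : ℕ):ℝ)^2 := by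
    by_contra hcon
    push_neg at hcon
    have hgrow : ∀ i, i ≤ N → 0 < i → (i:ℝ)*(ε^5/4) < energy f (m*q^i) := by
      intro i
      induction i with
      | zero => exact fun _ h0 => absurd h0 (lt_irrefl 0)
      | succ i ih =>
        intro hiN _
        have hik : 0 < m*q^i := Nat.mul_pos hm (pow_pos hq0 i)
        have hstep := energy_step hmeas hf hε0 hε1 hik hq0 hq16 (hcon i (by omega))
        have heq : m*q^(i+1) = (m*q^i)*q := by rw [pow_succ, mul_assoc]
        rw [← heq] at hstep
        rcases Nat.eq_zero_or_pos i with rfl | hi0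
        · have h0 := energy_nonneg f (m*q^0)
          push_cast
          linarith
        · have hih := ih (by omega) hi0
          push_cast
          push_cast at hih
          linarith
    have h1 := hgrow N le_rfl hN0
    have h2 := energy_le_one hmeas hf (Nat.mul_pos hm (pow_pos hq0 N))
    have h3 : (1:ℝ) ≤ (N:ℝ)*(ε^5/4) := by
      calc (1:ℝ) = (4*(ε^5)⁻¹)*(ε^5/4) := by field_simp
        _ ≤ (N:ℝ)*(ε^5/4) := mul_le_mul_of_nonneg_right hN4 (by positivity)
    linarith
  obtain ⟨i, hiN, hcard⟩ := key
  refine ⟨i, m*q^i, hiN, rfl, Nat.le_mul_of_pos_right m (pow_pos hq0 i),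
    Nat.mul_le_mul_left m (Nat.pow_le_pow_right hq0 hiN.le), ?_⟩
  have hk : 0 < m*q^i := Nat.mul_pos hm (pow_pos hq0 i)
  have hmap : ∀ p : Fin (m*q^i) × Fin (m*q^i),
      (¬ IntervalRegularPair f ε (eqInterval (m*q^i) p.1) (eqInterval (m*q^i) p.2)) →
      (p.1.val, p.2.val) ∈ badPairs f ε (m*q^i) := by
    rintro ⟨i1, j1⟩ hir
    rw [badPairs, Finset.mem_filter, Finset.mem_product, Finset.mem_range, Finset.mem_range]
    refine ⟨⟨i1.is_lt, j1.is_lt⟩, ?_⟩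
    intro hreg
    exact hir (reg_transfer f ε (cell_subset_eqInterval hk i1).1
      (cell_subset_eqInterval hk j1).1 (cell_ordConnected _ _) (cell_ordConnected _ _)
      (cell_subset_eqInterval hk i1).2 (cell_subset_eqInterval hk j1).2 hreg)
  have hcle : ((Finset.filter
      (fun p => ¬ IntervalRegularPair f ε (eqInterval (m*q^i) p.1) (eqInterval (m*q^i) p.2))
      (univ : Finset (Fin (m*q^i) × Fin (m*q^i)))).card : ℕ)
      ≤ (badPairs f ε (m*q^i)).card := by
    apply Finset.card_le_card_of_injOn (fun p => (p.1.val, p.2.val))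
    · intro p hp
      exact hmap p (Finset.mem_filter.1 hp).2
    · rintro ⟨a1, a2⟩ _ ⟨b1, b2⟩ _ h
      simp only [Prod.mk.injEq] at h
      exact Prod.ext (Fin.ext h.1) (Fin.ext h.2)
  calc ((Finset.filter
      (fun p => ¬ IntervalRegularPair f ε (eqInterval (m*q^i) p.1) (eqInterval (m*q^i) p.2))
      (univ : Finset (Fin (m*q^i) × Fin (m*q^i)))).card : ℝ)
      ≤ ((badPairs f ε (m*q^i)).card : ℝ) := by exact_mod_cast hcle
    _ ≤ ε * ((m*q^i : ℕ):ℝ)^2 := hcard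
    _ = ε * ((m*q^i : ℕ):ℝ)^2 := rfl
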